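/- Suppose f ∈ RV_∞(β) with β ∈ [0,1) is continuous and positive, and define F(x) = ∫₁ˣ du/f(u) for x > 0. Then F(x) ~ x/((1−β)·f(x)) as x → ∞; in particular F ∈ RV_∞(1−β) and F(x) → ∞ as x → ∞. -/

import Mathlib

def RegVary (h : ℝ → ℝ) (ρ : ℝ) : Prop :=
  ∀ l : ℝ, 0 < l →
    Filter.Tendsto (fun x => h (l * x) / h x) Filter.atTop (nhds (l ^ ρ))

open Filter Real MeasureTheory Set

lemma uct_loc (k : ℝ → ℝ) (ρ : ℝ) (hk : Continuous k)
    (h : ∀ t : ℝ, Tendsto (fun u => k (u + t) - k u) atTop (nhds (ρ * t)))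
    {ε : ℝ} (hε : 0 < ε) :
    ∃ δ > 0, ∃ N : ℝ, ∀ t ∈ Icc (0:ℝ) δ, ∀ u ≥ N, |k (u + t) - k u - ρ * t| ≤ ε := by
  set B : ℕ → Set ℝ := fun n => {t : ℝ | ∀ u ≥ (n:ℝ), |k (u + t) - k u - ρ * t| ≤ ε/2}
    with hB
  have hBc : ∀ n, IsClosed (B n) := by
    intro n
    have : B n = ⋂ u ∈ Ici (n:ℝ), {t : ℝ | |k (u + t) - k u - ρ * t| ≤ ε/2} := by
      ext t; simp [hB, Set.mem_iInter]
    rw [this]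
    refine isClosed_biInter fun u _ => ?_
    have : Continuous fun t => |k (u + t) - k u - ρ * t| := by continuity
    exact isClosed_le this continuous_const
  have hBu : (⋃ n, B n) = univ := by
    refine eq_univ_of_forall fun t => ?_
    obtain ⟨N, hN⟩ := (Metric.tendsto_atTop.mp (h t) (ε/2) (half_pos hε))
    refine mem_iUnion.mpr ⟨⌈N⌉₊, fun u hu => ?_⟩
    have := hN u (le_trans (Nat.le_ceil N) hu)
    rw [Real.dist_eq] at this
    exact le_of_lt (by simpa [sub_sub] using this)
  obtain ⟨n, hn⟩ := nonempty_interior_of_iUnion_of_closed hBc hBu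
  obtain ⟨t₀, ht₀⟩ := hn
  obtain ⟨r, hr, hball⟩ := Metric.mem_nhds_iff.mp (mem_interior_iff_mem_nhds.mp ht₀)
  refine ⟨r/2, by linarith, (n:ℝ), fun t ht u hu => ?_⟩
  have ht1 : t₀ + t ∈ B n := hball (by
    simp [Metric.mem_ball, Real.dist_eq, abs_of_nonneg ht.1]
    linarith [ht.2])
  have ht2 : t₀ ∈ B n := hball (Metric.mem_ball_self hr)
  have e1 : |k (u + (t₀ + t)) - k u - ρ * (t₀ + t)| ≤ ε/2 := ht1 u hu
  have e2 : |k ((u + t) + t₀) - k (u + t) - ρ * t₀| ≤ ε/2 := ht2 (u+t) (by linarith [ht.1])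
  have key : k (u + t) - k u - ρ * t =
      (k (u + (t₀ + t)) - k u - ρ * (t₀ + t)) - (k ((u + t) + t₀) - k (u + t) - ρ * t₀) := by
    have : u + (t₀ + t) = (u + t) + t₀ := by ring
    rw [this]; ring
  rw [key]
  calc |_ - _| ≤ _ + _ := abs_sub _ _
    _ ≤ ε := by linarith

lemma uct_loc2 (k : ℝ → ℝ) (ρ : ℝ) (hk : Continuous k)
    (h : ∀ t : ℝ, Tendsto (fun u => k (u + t) - k u) atTop (nhds (ρ * t)))
    {ε : ℝ} (hε : 0 < ε) :
    ∃ δ > 0, ∃ N : ℝ, ∀ t ∈ Icc (-δ) δ, ∀ u ≥ N, |k (u + t) - k u - ρ * t| ≤ ε := by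
  obtain ⟨δ, hδ, N, hN⟩ := uct_loc k ρ hk h hε
  refine ⟨δ, hδ, N + δ, fun t ht u hu => ?_⟩
  rcases le_or_gt 0 t with h0 | h0
  · exact hN t ⟨h0, ht.2⟩ u (by linarith)
  · have e1 : |k ((u + t) + (-t)) - k (u + t) - ρ * (-t)| ≤ ε :=
      hN (-t) ⟨by linarith, by linarith [ht.1]⟩ (u + t) (by linarith [ht.1])
    have : (u + t) + (-t) = u := by ring
    rw [this] at e1
    calc |k (u + t) - k u - ρ * t|
        = |k u - k (u + t) - ρ * (-t)| := by rw [abs_sub_comm]; ring_nf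
      _ ≤ ε := e1

lemma uct_localized (k : ℝ → ℝ) (ρ : ℝ) (hk : Continuous k)
    (h : ∀ t : ℝ, Tendsto (fun u => k (u + t) - k u) atTop (nhds (ρ * t)))
    {ε : ℝ} (hε : 0 < ε) (t₀ : ℝ) :
    ∃ δ > 0, ∃ N : ℝ, ∀ t ∈ Metric.ball t₀ δ, ∀ u ≥ N, |k (u + t) - k u - ρ * t| ≤ ε := by
  obtain ⟨δ, hδ, N₁, hN₁⟩ := uct_loc2 k ρ hk h (half_pos hε)
  obtain ⟨N₂, hN₂⟩ := (Metric.tendsto_atTop.mp (h t₀) (ε/2) (half_pos hε))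
  refine ⟨δ, hδ, max (N₁ - t₀) N₂, fun t ht u hu => ?_⟩
  have hs : t - t₀ ∈ Icc (-δ) δ := by
    rw [Metric.mem_ball, Real.dist_eq] at ht
    constructor <;> [linarith [neg_abs_le (t - t₀)]; linarith [le_abs_self (t - t₀)]]
  have e1 : |k ((u + t₀) + (t - t₀)) - k (u + t₀) - ρ * (t - t₀)| ≤ ε/2 :=
    hN₁ _ hs (u + t₀) (by have := le_max_left (N₁ - t₀) N₂; linarith [le_trans this hu])
  have e2 : |k (u + t₀) - k u - ρ * t₀| < ε/2 := by
    have := hN₂ u (le_trans (le_max_right _ _) hu); rwa [Real.dist_eq] at this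
  have key : k (u + t) - k u - ρ * t =
      (k ((u + t₀) + (t - t₀)) - k (u + t₀) - ρ * (t - t₀)) +
      (k (u + t₀) - k u - ρ * t₀) := by
    have : (u + t₀) + (t - t₀) = u + t := by ring
    rw [this]; ring
  rw [key]
  calc |_ + _| ≤ _ + _ := abs_add_le _ _
    _ ≤ ε := by linarith

lemma uct01 (k : ℝ → ℝ) (ρ : ℝ) (hk : Continuous k)
    (h : ∀ t : ℝ, Tendsto (fun u => k (u + t) - k u) atTop (nhds (ρ * t)))
    {ε : ℝ} (hε : 0 < ε) :
    ∃ N : ℝ, ∀ t ∈ Icc (0:ℝ) 1, ∀ u ≥ N, |k (u + t) - k u - ρ * t| ≤ ε := by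
  have H := fun t₀ : ℝ => uct_localized k ρ hk h hε t₀
  choose δ hδ N hN using H
  obtain ⟨s, hs⟩ := isCompact_Icc.elim_finite_subcover (fun t₀ : ℝ => Metric.ball t₀ (δ t₀))
    (fun t₀ => Metric.isOpen_ball)
    (fun t ht => mem_iUnion.mpr ⟨t, Metric.mem_ball_self (hδ t)⟩)
  refine ⟨(s.sup fun t => ⌈N t⌉₊ : ℕ), fun t ht u hu => ?_⟩
  obtain ⟨t₀, ht₀s, ht₀⟩ := by simpa using hs ht
  refine hN t₀ t ht₀ u (le_trans ?_ hu)
  calc N t₀ ≤ (⌈N t₀⌉₊ : ℝ) := Nat.le_ceil _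
    _ ≤ _ := Nat.cast_le.mpr (Finset.le_sup (f := fun t => ⌈N t⌉₊) ht₀s)

lemma potter_log (k : ℝ → ℝ) (ρ : ℝ) (hk : Continuous k)
    (h : ∀ t : ℝ, Tendsto (fun u => k (u + t) - k u) atTop (nhds (ρ * t)))
    {ε : ℝ} (hε : 0 < ε) :
    ∃ N : ℝ, ∀ t ≥ (0:ℝ), ∀ u ≥ N, |k (u + t) - k u - ρ * t| ≤ (t + 1) * ε := by
  obtain ⟨N, hN⟩ := uct01 k ρ hk h hε
  have main : ∀ m : ℕ, ∀ s ∈ Icc (0:ℝ) 1, ∀ u ≥ N,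
      |k (u + (m + s)) - k u - ρ * (m + s)| ≤ (m + 1) * ε := by
    intro m
    induction m with
    | zero => intro s hs u hu; simpa using hN s hs u hu
    | succ m ih =>
      intro s hs u hu
      have e1 : |k ((u + 1) + (m + s)) - k (u + 1) - ρ * (m + s)| ≤ (m + 1) * ε :=
        ih s hs (u + 1) (by linarith)
      have e2 : |k (u + 1) - k u - ρ * 1| ≤ ε := hN 1 ⟨zero_le_one, le_refl 1⟩ u hu
      have key : k (u + ((m+1:ℕ) + s)) - k u - ρ * ((m+1:ℕ) + s) =
          (k ((u + 1) + (m + s)) - k (u + 1) - ρ * (m + s)) +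
          (k (u + 1) - k u - ρ * 1) := by
        have : (u + 1) + ((m:ℝ) + s) = u + ((m+1:ℕ) + s) := by push_cast; ring
        rw [this]; push_cast; ring
      rw [key]
      calc |_ + _| ≤ _ + _ := abs_add_le _ _
        _ ≤ ((m+1:ℕ) + 1) * ε := by push_cast; nlinarith [hε.le]
  refine ⟨N, fun t ht u hu => ?_⟩
  have hfl : ((⌊t⌋₊ : ℝ) + (t - ⌊t⌋₊)) = t := by ring
  have hs : t - ⌊t⌋₊ ∈ Icc (0:ℝ) 1 := by
    constructor
    · linarith [Nat.floor_le ht]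
    · linarith [(Nat.lt_floor_add_one t).le]
  have := main ⌊t⌋₊ _ hs u hu
  rw [hfl] at this
  refine le_trans this (by nlinarith [Nat.floor_le ht, hε.le])


section PotterSec
variable {f : ℝ → ℝ} {β : ℝ}

lemma k_cont (hf_cont : ContinuousOn f (Set.Ioi 0)) (hf_pos : ∀ x > (0:ℝ), 0 < f x) :
    Continuous (fun u => Real.log (f (Real.exp u))) := by
  have h1 : Continuous (fun u => f (Real.exp u)) :=
    hf_cont.comp_continuous Real.continuous_exp (fun u => Set.mem_Ioi.mpr (Real.exp_pos u))
  exact Real.continuousOn_log.comp_continuous h1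
    (fun u => (hf_pos _ (Real.exp_pos u)).ne')

lemma k_tendsto (hf_pos : ∀ x > (0:ℝ), 0 < f x) (hf_rv : RegVary f β) (t : ℝ) :
    Tendsto (fun u => Real.log (f (Real.exp (u + t))) - Real.log (f (Real.exp u)))
      atTop (nhds (β * t)) := by
  have h1 : Tendsto (fun u => f (Real.exp t * Real.exp u) / f (Real.exp u)) atTop
      (nhds ((Real.exp t) ^ β)) :=
    (hf_rv (Real.exp t) (Real.exp_pos t)).comp Real.tendsto_exp_atTop
  have h2 := h1.log (by positivity)
  have h3 : Real.log ((Real.exp t) ^ β) = β * t := by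
    rw [Real.log_rpow (Real.exp_pos t), Real.log_exp]
  rw [h3] at h2
  refine h2.congr fun u => ?_
  rw [Real.log_div (hf_pos _ (by positivity)).ne' (hf_pos _ (Real.exp_pos u)).ne',
    Real.exp_add, mul_comm (Real.exp u)]

lemma potter (hf_cont : ContinuousOn f (Set.Ioi 0)) (hf_pos : ∀ x > (0:ℝ), 0 < f x)
    (hf_rv : RegVary f β) {ε : ℝ} (hε : 0 < ε) :
    ∃ X₀ ≥ (1:ℝ), ∀ u x : ℝ, X₀ ≤ u → u ≤ x →
      f x ≤ Real.exp ε * (x/u) ^ (β + ε) * f u := by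
  obtain ⟨N, hN⟩ := potter_log _ β (k_cont hf_cont hf_pos)
    (k_tendsto hf_pos hf_rv) hε
  refine ⟨Real.exp (max N 0), le_trans (by norm_num) (Real.exp_le_exp.mpr (le_max_right N 0)),
    fun u x hu hx => ?_⟩
  have hu0 : (0:ℝ) < u := lt_of_lt_of_le (Real.exp_pos _) hu
  have hx0 : (0:ℝ) < x := lt_of_lt_of_le hu0 hx
  have hlu : max N 0 ≤ Real.log u := by
    rw [← Real.log_exp (max N 0)]; exact Real.log_le_log (Real.exp_pos _) hu
  have ht : (0:ℝ) ≤ Real.log x - Real.log u := by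
    have := Real.log_le_log hu0 hx; linarith
  have := hN (Real.log x - Real.log u) ht (Real.log u) (le_trans (le_max_left N 0) hlu)
  have hxe : Real.log u + (Real.log x - Real.log u) = Real.log x := by ring
  rw [hxe, Real.exp_log hu0, Real.exp_log hx0] at this
  have hlog : Real.log (f x) ≤ Real.log (f u) + (β + ε) * (Real.log x - Real.log u) + ε := by
    have h1 := (abs_le.mp this).2
    nlinarith [hε.le]
  have hfx := hf_pos x hx0
  have hfu := hf_pos u hu0
  calc f x = Real.exp (Real.log (f x)) := (Real.exp_log hfx).symm
    _ ≤ Real.exp (Real.log (f u) + (β + ε) * (Real.log x - Real.log u) + ε) :=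
        Real.exp_le_exp.mpr hlog
    _ = Real.exp ε * (x/u) ^ (β + ε) * f u := by
        rw [Real.rpow_def_of_pos (by positivity), Real.log_div hx0.ne' hu0.ne',
          ← Real.exp_add]
        rw [show Real.log (f u) + (β + ε) * (Real.log x - Real.log u) + ε
            = (ε + (Real.log x - Real.log u) * (β + ε)) + Real.log (f u) by ring,
          Real.exp_add, Real.exp_log hfu]

end PotterSec

section CoreSec
variable {f : ℝ → ℝ} {β : ℝ}

lemma xf_atTop (hβ0 : 0 ≤ β) (hβ1 : β < 1)
    (hf_pos : ∀ x > (0:ℝ), 0 < f x)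
    {X₀ : ℝ} (hX₀ : 1 ≤ X₀)
    (hP : ∀ u x : ℝ, X₀ ≤ u → u ≤ x →
      f x ≤ Real.exp ((1-β)/2) * (x/u) ^ (β + (1-β)/2) * f u) :
    Tendsto (fun x => x / f x) atTop atTop := by
  set p : ℝ := β + (1-β)/2 with hp
  have hp1 : p < 1 := by rw [hp]; linarith
  have hp0 : 0 ≤ p := by rw [hp]; linarith
  have hX₀0 : (0:ℝ) < X₀ := by linarith
  have hfX₀ : 0 < f X₀ := hf_pos X₀ hX₀0
  set c : ℝ := X₀ ^ p / (Real.exp ((1-β)/2) * f X₀) with hc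
  have hc0 : 0 < c := by rw [hc]; positivity
  have hmain : Tendsto (fun x : ℝ => c * x ^ (1 - p)) atTop atTop :=
    (tendsto_rpow_atTop (by linarith)).const_mul_atTop hc0
  refine tendsto_atTop_mono' atTop ?_ hmain
  filter_upwards [eventually_ge_atTop X₀] with x hx
  have hx0 : (0:ℝ) < x := lt_of_lt_of_le hX₀0 hx
  have hfx : 0 < f x := hf_pos x hx0
  have hb := hP X₀ x le_rfl hx
  have hBpos : 0 < Real.exp ((1-β)/2) * (x/X₀) ^ p * f X₀ := by positivity
  have h1 : x / (Real.exp ((1-β)/2) * (x/X₀) ^ p * f X₀) ≤ x / f x :=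
    div_le_div_of_nonneg_left hx0.le hfx hb
  refine le_trans (le_of_eq ?_) h1
  rw [Real.div_rpow hx0.le hX₀0.le]
  rw [Real.rpow_sub hx0, Real.rpow_one]
  field_simp [hc]
  rw [hc]
  field_simp

end CoreSec

section CoreSec2
variable {f : ℝ → ℝ} {β : ℝ}

lemma core (hβ0 : 0 ≤ β) (hβ1 : β < 1)
    (hf_cont : ContinuousOn f (Set.Ioi 0)) (hf_pos : ∀ x > (0:ℝ), 0 < f x)
    (hf_rv : RegVary f β) :
    Tendsto (fun x => (∫ u in (1:ℝ)..x, 1 / f u) * f x / x) atTop (nhds (1-β)⁻¹) := by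
  set ε₀ : ℝ := (1-β)/2 with hε₀
  have hε₀0 : 0 < ε₀ := by rw [hε₀]; linarith
  obtain ⟨X₀, hX₀1, hP⟩ := potter hf_cont hf_pos hf_rv hε₀0
  have hX₀0 : (0:ℝ) < X₀ := by linarith
  have hxf : Tendsto (fun x => x / f x) atTop atTop := xf_atTop hβ0 hβ1 hf_pos hX₀1 hP
  set g : ℝ → ℝ := fun u => 1 / f u with hg
  have hg_cont : ContinuousOn g (Set.Ioi 0) :=
    continuousOn_const.div hf_cont (fun x hx => (hf_pos x hx).ne')
  have hgint : ∀ a b : ℝ, 0 < a → 0 < b → IntervalIntegrable g volume a b := by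
    intro a b ha hb
    refine (hg_cont.mono ?_).intervalIntegrable
    intro t ht
    rw [Set.mem_uIcc] at ht
    rcases ht with ⟨h1, _⟩ | ⟨h1, _⟩ <;> [exact lt_of_lt_of_le ha h1; exact lt_of_lt_of_le hb h1]
  set Φ : ℝ → ℝ → ℝ := fun x s => (Set.Ioc (X₀/x) 1).indicator (fun s => f x / f (s*x)) s
    with hΦ
  -- eventual equality
  have hkey : ∀ᶠ x in atTop, (∫ u in (1:ℝ)..x, g u) * f x / x =
      (∫ u in (1:ℝ)..X₀, g u) * f x / x + ∫ s in Set.Ioc (0:ℝ) 1, Φ x s := by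
    filter_upwards [eventually_ge_atTop X₀] with x hx
    have hx0 : (0:ℝ) < x := lt_of_lt_of_le hX₀0 hx
    have hsplit : (∫ u in (1:ℝ)..x, g u) =
        (∫ u in (1:ℝ)..X₀, g u) + ∫ u in X₀..x, g u :=
      (intervalIntegral.integral_add_adjacent_intervals
        (hgint 1 X₀ one_pos hX₀0) (hgint X₀ x hX₀0 hx0)).symm
    have hsub : (∫ s in (X₀/x)..1, g (s*x)) = x⁻¹ * ∫ u in X₀..x, g u := by
      rw [intervalIntegral.integral_comp_mul_right g hx0.ne', smul_eq_mul]
      congr 2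
      · exact div_mul_cancel₀ X₀ hx0.ne'
      · exact one_mul x
    have h2 : (∫ u in X₀..x, g u) * f x / x = ∫ s in (X₀/x)..1, f x * g (s*x) := by
      rw [intervalIntegral.integral_const_mul, hsub]
      field_simp
    have h3 : (∫ s in (X₀/x)..1, f x * g (s*x)) = ∫ s in Set.Ioc (0:ℝ) 1, Φ x s := by
      rw [intervalIntegral.integral_of_le (by rw [div_le_one hx0]; linarith)]
      rw [hΦ]
      rw [MeasureTheory.setIntegral_indicator measurableSet_Ioc]
      rw [Set.inter_eq_self_of_subset_right
        (Set.Ioc_subset_Ioc_left (by positivity))]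
      refine MeasureTheory.setIntegral_congr_fun measurableSet_Ioc fun s hs => ?_
      simp [hg, mul_one_div, div_eq_mul_inv]
    rw [hsplit, add_mul, add_div, h2, h3]
  -- DCT
  have hβε : β + ε₀ < 1 := by rw [hε₀]; linarith
  have hDCT : Tendsto (fun x => ∫ s in Set.Ioc (0:ℝ) 1, Φ x s) atTop
      (nhds (∫ s in Set.Ioc (0:ℝ) 1, s ^ (-β))) := by
    refine MeasureTheory.tendsto_integral_filter_of_dominated_convergence
      (fun s => Real.exp ε₀ * s ^ (-(β + ε₀))) ?_ ?_ ?_ ?_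
    · filter_upwards [eventually_gt_atTop (0:ℝ)] with x hx0
      have hmul : ContinuousOn (fun s : ℝ => f (s*x)) (Set.Ioc 0 1) :=
        hf_cont.comp ((continuous_id.mul continuous_const).continuousOn)
          (fun s hs => Set.mem_Ioi.mpr (mul_pos hs.1 hx0))
      have hcont : ContinuousOn (fun s => f x / f (s*x)) (Set.Ioc 0 1) :=
        continuousOn_const.div hmul (fun s hs => (hf_pos _ (mul_pos hs.1 hx0)).ne')
      exact (hcont.aestronglyMeasurable measurableSet_Ioc).indicator measurableSet_Ioc
    · filter_upwards [eventually_ge_atTop X₀] with x hx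
      have hx0 : (0:ℝ) < x := lt_of_lt_of_le hX₀0 hx
      filter_upwards [MeasureTheory.ae_restrict_mem measurableSet_Ioc] with s hs
      by_cases hmem : s ∈ Set.Ioc (X₀/x) 1
      · rw [hΦ]
        simp only [Set.indicator_of_mem hmem]
        have hsx0 : 0 < s * x := mul_pos hs.1 hx0
        have hfsx : 0 < f (s*x) := hf_pos _ hsx0
        have hfx : 0 < f x := hf_pos _ hx0
        rw [Real.norm_of_nonneg (by positivity)]
        have hXsx : X₀ ≤ s * x := ((div_lt_iff₀ hx0).mp hmem.1).le
        have hsxx : s * x ≤ x := by nlinarith [hmem.2]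
        have hb := hP (s*x) x hXsx hsxx
        rw [div_le_iff₀ hfsx]
        refine le_trans hb (le_of_eq ?_)
        rw [show x / (s*x) = s⁻¹ by
            rw [div_eq_iff hsx0.ne', ← mul_assoc, inv_mul_cancel₀ hs.1.ne', one_mul],
          Real.inv_rpow hs.1.le, ← Real.rpow_neg hs.1.le]
      · rw [hΦ]
        simp only [Set.indicator_of_notMem hmem]
        rw [norm_zero]
        have : (0:ℝ) < s := hs.1
        positivity
    · have h1 : IntervalIntegrable (fun s : ℝ => s ^ (-(β+ε₀))) volume 0 1 :=
        intervalIntegral.intervalIntegrable_rpow' (by linarith)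
      have h2 := (intervalIntegrable_iff_integrableOn_Ioc_of_le zero_le_one).mp h1
      exact h2.const_mul _
    · filter_upwards [MeasureTheory.ae_restrict_mem measurableSet_Ioc] with s hs
      have hs0 : (0:ℝ) < s := hs.1
      have hX₀s : (0:ℝ) < X₀ / s := by positivity
      have h0 := (hf_rv s hs0).inv₀ (Real.rpow_pos_of_pos hs0 β).ne'
      rw [← Real.rpow_neg hs0.le] at h0
      have h1 : Tendsto (fun x => f x / f (s*x)) atTop (nhds (s ^ (-β))) := by
        refine h0.congr fun x => ?_
        rw [inv_div]
      refine h1.congr' ?_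
      filter_upwards [eventually_gt_atTop (X₀ / s)] with x hxs
      have hx0 : (0:ℝ) < x := lt_trans hX₀s hxs
      rw [hΦ]
      exact (Set.indicator_of_mem (Set.mem_Ioc.mpr
        ⟨by rw [div_lt_iff₀ hx0, mul_comm]; exact (div_lt_iff₀ hs0).mp hxs, hs.2⟩)
        (fun s => f x / f (s * x))).symm
  have hlim_val : (∫ s in Set.Ioc (0:ℝ) 1, s ^ (-β)) = (1-β)⁻¹ := by
    rw [← intervalIntegral.integral_of_le zero_le_one,
      integral_rpow (Or.inl (by linarith : (-1:ℝ) < -β))]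
    rw [Real.one_rpow, Real.zero_rpow (ne_of_gt (by linarith : (0:ℝ) < -β + 1))]
    rw [sub_zero, one_div]
    ring_nf
  have hterm1 : Tendsto (fun x => (∫ u in (1:ℝ)..X₀, g u) * f x / x) atTop (nhds 0) := by
    have h0 : Tendsto (fun x : ℝ => (x / f x)⁻¹) atTop (nhds 0) := hxf.inv_tendsto_atTop
    have h1 := h0.const_mul (∫ u in (1:ℝ)..X₀, g u)
    rw [mul_zero] at h1
    refine h1.congr fun x => ?_
    rw [inv_div, mul_div_assoc]
  have hsum := hterm1.add hDCT
  rw [hlim_val, zero_add] at hsum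
  exact Tendsto.congr' (hkey.mono fun x h => h.symm) hsum

end CoreSec2

theorem karamata_F (f : ℝ → ℝ) (β : ℝ) (hβ0 : 0 ≤ β) (hβ1 : β < 1)
    (hf_cont : ContinuousOn f (Set.Ioi 0)) (hf_pos : ∀ x > (0:ℝ), 0 < f x)
    (hf_rv : RegVary f β) :
    let F : ℝ → ℝ := fun x => ∫ u in (1:ℝ)..x, 1 / f u
    Filter.Tendsto (fun x => F x / (x / ((1 - β) * f x))) Filter.atTop (nhds 1) ∧
    RegVary F (1 - β) ∧
    Filter.Tendsto F Filter.atTop Filter.atTop := by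
  intro F
  have hF : F = fun x => ∫ u in (1:ℝ)..x, 1 / f u := rfl
  have hcore := core hβ0 hβ1 hf_cont hf_pos hf_rv
  obtain ⟨X₀, hX₀1, hP⟩ := potter hf_cont hf_pos hf_rv
    (show (0:ℝ) < (1-β)/2 by linarith)
  have hxf : Tendsto (fun x => x / f x) atTop atTop :=
    xf_atTop hβ0 hβ1 hf_pos hX₀1 hP
  have hβpos : (0:ℝ) < 1 - β := by linarith
  have hinv : (0:ℝ) < (1-β)⁻¹ := by positivity
  have hG3 : Tendsto F atTop atTop := by
    have h2 := Filter.Tendsto.pos_mul_atTop hinv hcore hxf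
    refine Tendsto.congr' ?_ h2
    filter_upwards [eventually_gt_atTop (0:ℝ)] with x hx0
    have hfx := hf_pos x hx0
    rw [hF]
    field_simp
  refine ⟨?_, ?_, hG3⟩
  · have h1 := hcore.const_mul (1-β)
    rw [mul_inv_cancel₀ hβpos.ne'] at h1
    refine Tendsto.congr' ?_ h1
    filter_upwards [eventually_gt_atTop (0:ℝ)] with x hx0
    have hfx := hf_pos x hx0
    rw [hF]
    field_simp
  · intro l hl
    have hlx : Tendsto (fun x : ℝ => l * x) atTop atTop :=
      Tendsto.const_mul_atTop hl tendsto_id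
    have hcomp : Tendsto (fun x =>
        (∫ u in (1:ℝ)..(l*x), 1 / f u) * f (l*x) / (l*x)) atTop (nhds (1-β)⁻¹) :=
      hcore.comp hlx
    have hratio := hcomp.div hcore hinv.ne'
    have hfr := (hf_rv l hl).inv₀ (Real.rpow_pos_of_pos hl β).ne'
    have hprod := hratio.mul (hfr.const_mul l)
    have hval : (1-β)⁻¹ / (1-β)⁻¹ * (l * (l ^ β)⁻¹) = l ^ (1 - β) := by
      rw [div_self hinv.ne', one_mul, ← Real.rpow_neg hl.le,
        show (1:ℝ) - β = 1 + -β by ring, Real.rpow_add hl, Real.rpow_one]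
    rw [hval] at hprod
    refine Tendsto.congr' ?_ hprod
    filter_upwards [hG3.eventually_ge_atTop 1, eventually_gt_atTop (0:ℝ)] with x hFx hx0
    have hfx := hf_pos x hx0
    have hlx0 : 0 < l * x := mul_pos hl hx0
    have hflx := hf_pos _ hlx0
    have hFpos : (0:ℝ) < F x := lt_of_lt_of_le one_pos hFx
    rw [hF] at hFpos ⊢
    simp only [Pi.div_apply] at hFpos ⊢
    field_simp
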